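/- Suppose T is unbounded from above and from below (i.e., a_1 = −∞ and b_K = ∞). Then for every α ∈ (0,1), 2·Φ^{−1}(1 − p_* α/2) ≤ 2·Φ^{−1}(1 − α/2) + (a_K − b_1)/ς, where a_K − b_1 is to be interpreted as 0 in case K = 1. -/

import Mathlib

open Filter MeasureTheory ProbabilityTheory Set

/-- The cdf of the normal distribution with mean `θ` and variance `ς²`, truncated to the
set `T`: `F^T_{θ,ς²}(w) = P(V ≤ w ∧ V ∈ T) / P(V ∈ T)` for `V ~ N(θ, ς²)`. -/
noncomputable def truncNormalCDF (ς : ℝ) (T : Set ℝ) (θ w : ℝ) : ℝ :=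
  ((gaussianReal θ (Real.toNNReal (ς ^ 2))) (Set.Iic w ∩ T)).toReal /
    ((gaussianReal θ (Real.toNNReal (ς ^ 2))) T).toReal

/-- The standard normal cumulative distribution function. -/
noncomputable def stdNormalCDF (x : ℝ) : ℝ :=
  ∫ t in Set.Iic x, (Real.sqrt (2 * Real.pi))⁻¹ * Real.exp (-(t ^ 2) / 2)

/-- The inverse `Φ^{−1}` of the standard normal cdf on `(0,1)`. -/
noncomputable def stdNormalCDFInv (p : ℝ) : ℝ :=
  Function.invFun stdNormalCDF p

noncomputable def phi (t : ℝ) : ℝ := (Real.sqrt (2 * Real.pi))⁻¹ * Real.exp (-(t ^ 2) / 2)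

lemma phi_eq_pdf : phi = gaussianPDFReal 0 1 := by
  ext t
  simp [phi, gaussianPDFReal]

lemma continuous_phi : Continuous phi := by
  unfold phi
  fun_prop

lemma phi_pos (t : ℝ) : 0 < phi t := by
  unfold phi
  positivity

lemma integrable_phi : Integrable phi := by
  rw [phi_eq_pdf]; exact integrable_gaussianPDFReal 0 1

lemma integral_phi : ∫ t, phi t = 1 := by
  rw [phi_eq_pdf]; exact integral_gaussianPDFReal_eq_one 0 one_ne_zero

lemma phi_neg (t : ℝ) : phi (-t) = phi t := by simp [phi]

lemma hasDerivAt_phi (t : ℝ) : HasDerivAt phi (-t * phi t) t := by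
  have h1 : HasDerivAt (fun t : ℝ => -(t ^ 2) / 2) (-t) t := by
    have := ((hasDerivAt_pow 2 t).neg).div_const 2
    simpa using this.congr_deriv (by ring)
  have := (h1.exp).const_mul (Real.sqrt (2 * Real.pi))⁻¹
  unfold phi
  exact this.congr_deriv (by ring)


lemma Phi_eq (x : ℝ) : stdNormalCDF x = ∫ t in Set.Iic x, phi t := rfl

lemma Phi_add_Ioi (x : ℝ) : stdNormalCDF x + ∫ t in Set.Ioi x, phi t = 1 := by
  rw [Phi_eq, intervalIntegral.integral_Iic_add_Ioi integrable_phi.integrableOn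
    integrable_phi.integrableOn, integral_phi]

lemma integral_Ioi_pos {s : Set ℝ} (hs : MeasurableSet s) (hμ : 0 < volume s) :
    0 < ∫ t in s, phi t := by
  rw [setIntegral_pos_iff_support_of_nonneg_ae (ae_of_all _ fun t => (phi_pos t).le)
    integrable_phi.integrableOn]
  have : (Function.support phi) = Set.univ := by
    ext t; simp [Function.mem_support, (phi_pos t).ne']
  rw [this, Set.univ_inter]
  exact hμ

lemma Phi_pos (x : ℝ) : 0 < stdNormalCDF x := by
  rw [Phi_eq]
  exact integral_Ioi_pos measurableSet_Iic (by simp)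

lemma Phi_lt_one (x : ℝ) : stdNormalCDF x < 1 := by
  have h := Phi_add_Ioi x
  have : 0 < ∫ t in Set.Ioi x, phi t := integral_Ioi_pos measurableSet_Ioi (by simp)
  linarith

lemma strictMono_Phi : StrictMono stdNormalCDF := by
  intro x y hxy
  rw [Phi_eq, Phi_eq]
  have : Set.Iic y = Set.Iic x ∪ Set.Ioc x y := (Set.Iic_union_Ioc_eq_Iic hxy.le).symm
  rw [this, setIntegral_union (Iic_disjoint_Ioc le_rfl) measurableSet_Ioc
    integrable_phi.integrableOn integrable_phi.integrableOn]
  have : 0 < ∫ t in Set.Ioc x y, phi t := integral_Ioi_pos measurableSet_Ioc (by simp [hxy])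
  linarith

lemma Phi_neg (x : ℝ) : stdNormalCDF (-x) = 1 - stdNormalCDF x := by
  have h1 : stdNormalCDF (-x) = ∫ t in Set.Ioi x, phi t := by
    rw [Phi_eq]
    have := integral_comp_neg_Iic (-x) phi
    simp_rw [phi_neg, neg_neg] at this
    exact this
  have := Phi_add_Ioi x
  linarith

lemma Phi_zero : stdNormalCDF 0 = 1 / 2 := by
  have := Phi_neg 0
  rw [neg_zero] at this
  linarith

lemma hasDerivAt_Phi (x : ℝ) : HasDerivAt stdNormalCDF (phi x) x := by
  have key : ∀ y : ℝ, stdNormalCDF y = stdNormalCDF 0 + ∫ t in (0:ℝ)..y, phi t := by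
    intro y
    rw [Phi_eq, Phi_eq]
    have := intervalIntegral.integral_Iic_sub_Iic (integrable_phi.integrableOn (s := Set.Iic (0:ℝ)))
      (integrable_phi.integrableOn (s := Set.Iic y))
    linarith
  have : HasDerivAt (fun y => stdNormalCDF 0 + ∫ t in (0:ℝ)..y, phi t) (phi x) x := by
    refine HasDerivAt.const_add _ ?_
    exact intervalIntegral.integral_hasDerivAt_right
      integrable_phi.intervalIntegrable
      (continuous_phi.stronglyMeasurableAtFilter _ _)
      continuous_phi.continuousAt
  exact this.congr_of_eventuallyEq (Filter.Eventually.of_forall key)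

lemma continuous_Phi : Continuous stdNormalCDF := by
  have : Differentiable ℝ stdNormalCDF := fun x => (hasDerivAt_Phi x).differentiableAt
  exact this.continuous



lemma tendsto_phi_atTop : Tendsto phi atTop (nhds 0) := by
  have h : Tendsto (fun t : ℝ => Real.exp (-(t ^ 2) / 2)) atTop (nhds 0) := by
    apply Real.tendsto_exp_atBot.comp
    apply Tendsto.atBot_div_const (by norm_num)
    exact tendsto_neg_atTop_atBot.comp (tendsto_pow_atTop two_ne_zero)
  have := h.const_mul (Real.sqrt (2 * Real.pi))⁻¹
  rw [mul_zero] at this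
  exact this

lemma integrable_mul_phi : Integrable (fun t => t * phi t) := by
  have h := integrable_mul_exp_neg_mul_sq (b := 1/2) (by norm_num)
  have := h.mul_const (Real.sqrt (2 * Real.pi))⁻¹
  apply this.congr
  apply Filter.Eventually.of_forall
  intro t
  simp only [phi]
  ring

lemma integral_mul_phi_Ioi (x : ℝ) : ∫ t in Set.Ioi x, t * phi t = phi x := by
  have h := MeasureTheory.integral_Ioi_of_hasDerivAt_of_tendsto
    (f := fun t => -phi t) (f' := fun t => t * phi t) (a := x) (m := 0)
    (continuous_phi.neg.continuousWithinAt)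
    (fun t _ => by exact (hasDerivAt_phi t).neg.congr_deriv (by ring))
    (integrable_mul_phi.integrableOn)
    (by simpa using tendsto_phi_atTop.neg)
  simpa using h

lemma mills (x : ℝ) (hx : 0 < x) : (1 - stdNormalCDF x) * x ≤ phi x := by
  have h1 : 1 - stdNormalCDF x = ∫ t in Set.Ioi x, phi t := by
    have := Phi_add_Ioi x; linarith
  have h2 : (∫ t in Set.Ioi x, phi t) * x = ∫ t in Set.Ioi x, phi t * x := by
    rw [← integral_mul_const]
  rw [h1, h2, ← integral_mul_phi_Ioi x]
  apply setIntegral_mono_on (integrable_phi.mul_const x).integrableOn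
    integrable_mul_phi.integrableOn measurableSet_Ioi
  intro t ht
  have := phi_pos t
  nlinarith [Set.mem_Ioi.mp ht]

lemma exists_Phi_gt (p : ℝ) (hp : p < 1) : ∃ x : ℝ, p < stdNormalCDF x := by
  set M : ℝ := (Real.sqrt (2 * Real.pi))⁻¹ with hM
  have hM0 : 0 < M := by positivity
  set x : ℝ := max 1 ((M + 1) / (1 - p)) with hx
  have hx1 : (1 : ℝ) ≤ x := le_max_left _ _
  have hx0 : 0 < x := lt_of_lt_of_le one_pos hx1
  have hphiM : phi x ≤ M := by
    have : Real.exp (-(x ^ 2) / 2) ≤ 1 := by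
      rw [Real.exp_le_one_iff]; nlinarith
    calc phi x = M * Real.exp (-(x ^ 2) / 2) := rfl
    _ ≤ M * 1 := by nlinarith
    _ = M := mul_one M
  have hkey : M < (1 - p) * x := by
    have : (1 - p) * ((M + 1) / (1 - p)) = M + 1 := by
      rw [mul_div_cancel₀]
      linarith
    nlinarith [le_max_right 1 ((M + 1) / (1 - p)), mul_le_mul_of_nonneg_left
      (le_max_right 1 ((M + 1) / (1 - p))) (le_of_lt (by linarith : (0:ℝ) < 1 - p))]
  refine ⟨x, ?_⟩
  have := mills x hx0
  nlinarith

lemma exists_Phi_eq {p : ℝ} (hp : p ∈ Set.Ioo (0:ℝ) 1) : ∃ x : ℝ, stdNormalCDF x = p := by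
  obtain ⟨v, hv⟩ := exists_Phi_gt p hp.2
  obtain ⟨w, hw⟩ := exists_Phi_gt (1 - p) (by linarith [hp.1])
  have hu : stdNormalCDF (-w) < p := by rw [Phi_neg]; linarith
  have huv : -w ≤ v := le_of_lt (strictMono_Phi.lt_iff_lt.mp (lt_trans hu hv))
  have := intermediate_value_Icc huv continuous_Phi.continuousOn
  obtain ⟨x, _, hx⟩ := this ⟨le_of_lt hu, le_of_lt hv⟩
  exact ⟨x, hx⟩

lemma Phi_inv_eq {p : ℝ} (hp : p ∈ Set.Ioo (0:ℝ) 1) :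
    stdNormalCDF (stdNormalCDFInv p) = p :=
  Function.invFun_eq (exists_Phi_eq hp)


lemma phi_le_phi {u v : ℝ} (h : u ^ 2 ≤ v ^ 2) : phi v ≤ phi u := by
  unfold phi
  have : Real.exp (-(v ^ 2) / 2) ≤ Real.exp (-(u ^ 2) / 2) := by
    apply Real.exp_le_exp.mpr; linarith
  have h0 : (0:ℝ) ≤ (Real.sqrt (2 * Real.pi))⁻¹ := by positivity
  nlinarith

/-- `Φ(t-c) + Φ(-t-c) ≥ 2Φ(-c)` -/
lemma symm_min (c : ℝ) (hc : 0 ≤ c) (t : ℝ) :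
    2 * stdNormalCDF (-c) ≤ stdNormalCDF (t - c) + stdNormalCDF (-t - c) := by
  set g : ℝ → ℝ := fun t => stdNormalCDF (t - c) + stdNormalCDF (-t - c) with hg
  have hd : ∀ t : ℝ, HasDerivAt g (phi (t - c) - phi (t + c)) t := by
    intro t
    have h1 : HasDerivAt (fun t : ℝ => stdNormalCDF (t - c)) (phi (t - c)) t := by
      simpa [Function.comp_def] using (hasDerivAt_Phi (t - c)).comp t ((hasDerivAt_id t).sub_const c)
    have h2 : HasDerivAt (fun t : ℝ => stdNormalCDF (-t - c)) (-phi (-t - c)) t := by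
      have := (hasDerivAt_Phi (-t - c)).comp t (((hasDerivAt_id t).neg).sub_const c)
      simpa [Function.comp_def] using this
    have h3 : phi (-t - c) = phi (t + c) := by
      rw [show -t - c = -(t + c) by ring]
      exact phi_neg _
    have := h1.add h2
    rw [h3] at this
    exact this.congr_deriv (by ring)
  have hmono : MonotoneOn g (Set.Ici (0:ℝ)) := by
    apply monotoneOn_of_deriv_nonneg (convex_Ici 0)
      (fun t _ => (hd t).continuousAt.continuousWithinAt)
      (fun t _ => ((hd t).differentiableAt).differentiableWithinAt)
    intro t ht
    rw [(hd t).deriv]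
    have ht0 : 0 < t := by simpa using ht
    have : (t - c) ^ 2 ≤ (t + c) ^ 2 := by nlinarith
    linarith [phi_le_phi this]
  have hsymm : ∀ t : ℝ, g (-t) = g t := by
    intro t; simp only [hg]; rw [show -(-t) - c = t - c by ring, show -t - c = -t - c from rfl]
    ring_nf
  have hg0 : g 0 = 2 * stdNormalCDF (-c) := by
    simp only [hg]; rw [show (0:ℝ) - c = -c by ring, show -(0:ℝ) - c = -c by ring]; ring
  rcases le_total 0 t with h | h
  · have := hmono (Set.mem_Ici.mpr le_rfl) (Set.mem_Ici.mpr h) h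
    rw [hg0] at this; exact this
  · have := hmono (Set.mem_Ici.mpr le_rfl) (Set.mem_Ici.mpr (by linarith : (0:ℝ) ≤ -t))
      (by linarith)
    rw [hg0, hsymm t] at this; exact this

noncomputable def lam (x : ℝ) : ℝ := phi x / (1 - stdNormalCDF x)

lemma one_sub_Phi_pos (x : ℝ) : 0 < 1 - stdNormalCDF x := by linarith [Phi_lt_one x]

lemma hasDerivAt_lam (x : ℝ) : HasDerivAt lam
    ((-x * phi x * (1 - stdNormalCDF x) + phi x * phi x) / (1 - stdNormalCDF x) ^ 2) x := by
  have h1 : HasDerivAt (fun x => 1 - stdNormalCDF x) (-phi x) x := by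
    simpa using (hasDerivAt_Phi x).const_sub 1
  have := (hasDerivAt_phi x).div h1 (one_sub_Phi_pos x).ne'
  exact this.congr_deriv (by ring)

lemma lam_mono : Monotone lam := by
  apply monotone_of_deriv_nonneg
  · exact fun x => (hasDerivAt_lam x).differentiableAt
  · intro x
    rw [(hasDerivAt_lam x).deriv]
    apply div_nonneg _ (sq_nonneg _)
    have hphi := phi_pos x
    rcases le_total x 0 with h | h
    · have h1 := one_sub_Phi_pos x
      have h2 : 0 ≤ -x * phi x * (1 - stdNormalCDF x) :=
        mul_nonneg (mul_nonneg (by linarith) hphi.le) h1.le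
      nlinarith
    · rcases eq_or_lt_of_le h with h | h
      · simp [← h]; nlinarith [one_sub_Phi_pos x]
      · have := mills x h
        nlinarith

noncomputable def hfun (x : ℝ) : ℝ := Real.log (1 - stdNormalCDF x)

lemma hasDerivAt_hfun (x : ℝ) : HasDerivAt hfun (-lam x) x := by
  have h1 : HasDerivAt (fun x => 1 - stdNormalCDF x) (-phi x) x := by
    simpa using (hasDerivAt_Phi x).const_sub 1
  have := h1.log (one_sub_Phi_pos x).ne'
  exact this.congr_deriv (by simp [lam, neg_div])

lemma hfun_subadd {x c : ℝ} (hx : 0 ≤ x) (hc : 0 ≤ c) :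
    hfun (x + c) - hfun x ≤ hfun c - hfun 0 := by
  set F : ℝ → ℝ := fun x => hfun (x + c) - hfun x with hF
  have hd : ∀ x : ℝ, HasDerivAt F (-lam (x + c) + lam x) x := by
    intro x
    have h1 : HasDerivAt (fun x : ℝ => hfun (x + c)) (-lam (x + c)) x := by
      simpa [Function.comp_def] using (hasDerivAt_hfun (x + c)).comp x ((hasDerivAt_id x).add_const c)
    exact (h1.add (hasDerivAt_hfun x).neg).congr_deriv (by ring)
  have hanti : Antitone F := by
    apply antitone_of_deriv_nonpos
    · exact fun x => (hd x).differentiableAt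
    · intro x
      rw [(hd x).deriv]
      have := lam_mono (by linarith : x ≤ x + c)
      linarith
  have := hanti hx
  simpa [hF] using this

lemma subadd {x c : ℝ} (hx : 0 ≤ x) (hc : 0 ≤ c) :
    stdNormalCDF (-(x + c)) ≤ 2 * stdNormalCDF (-x) * stdNormalCDF (-c) := by
  have key := hfun_subadd hx hc
  have e : ∀ y : ℝ, hfun y = Real.log (stdNormalCDF (-y)) := by
    intro y; rw [hfun, Phi_neg]
  rw [e, e, e, e] at key
  rw [neg_zero, Phi_zero] at key
  have hpx := Phi_pos (-x)
  have hpc := Phi_pos (-c)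
  have hpxc := Phi_pos (-(x + c))
  have hrhs : 0 < 2 * stdNormalCDF (-x) * stdNormalCDF (-c) := by positivity
  rw [← Real.log_le_log_iff hpxc hrhs]
  have : Real.log (2 * stdNormalCDF (-x) * stdNormalCDF (-c)) =
      Real.log 2 + Real.log (stdNormalCDF (-x)) + Real.log (stdNormalCDF (-c)) := by
    rw [Real.log_mul (by positivity) hpc.ne', Real.log_mul two_ne_zero hpx.ne']
  rw [this]
  have h2 : Real.log (1 / 2 : ℝ) = -Real.log 2 := by
    rw [one_div, Real.log_inv]
  rw [h2] at key
  linarith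


variable {ς ϑ : ℝ}

lemma gauss_eq_map (hς : 0 < ς) (ϑ : ℝ) :
    gaussianReal ϑ (Real.toNNReal (ς ^ 2)) =
      (gaussianReal 0 1).map (fun x => x * ς + ϑ) := by
  have h1 : (gaussianReal 0 1).map (· * ς) = gaussianReal 0 (Real.toNNReal (ς ^ 2)) := by
    rw [gaussianReal_map_mul_const ς]
    congr 1
    · ring
    · ext
      simp [Real.coe_toNNReal _ (sq_nonneg ς)]
  have h2 : (gaussianReal 0 (Real.toNNReal (ς ^ 2))).map (· + ϑ) =
      gaussianReal ϑ (Real.toNNReal (ς ^ 2)) := by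
    rw [gaussianReal_map_add_const ϑ, zero_add]
  rw [← h2, ← h1,
    Measure.map_map (measurable_add_const ϑ) (measurable_mul_const ς)]
  rfl

lemma gauss_set (hς : 0 < ς) (S : Set ℝ) (hS : MeasurableSet S) :
    ((gaussianReal ϑ (Real.toNNReal (ς ^ 2))) S).toReal =
      ∫ t in (fun x : ℝ => x * ς + ϑ) ⁻¹' S, phi t := by
  rw [gauss_eq_map hς, Measure.map_apply (by fun_prop) hS,
    gaussianReal_apply_eq_integral 0 one_ne_zero, ← phi_eq_pdf,
    ENNReal.toReal_ofReal]
  exact integral_nonneg fun t => (phi_pos t).le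

lemma gauss_Iic (hς : 0 < ς) (r : ℝ) :
    ((gaussianReal ϑ (Real.toNNReal (ς ^ 2))) (Set.Iic r)).toReal =
      stdNormalCDF ((r - ϑ) / ς) := by
  rw [gauss_set hς _ measurableSet_Iic, Phi_eq]
  have hpre : (fun x : ℝ => x * ς + ϑ) ⁻¹' Set.Iic r = Set.Iic ((r - ϑ) / ς) := by
    ext x
    simp only [Set.mem_preimage, Set.mem_Iic]
    rw [le_div_iff₀ hς]
    constructor <;> intro h <;> linarith
  rw [hpre]

lemma gauss_Iio (hς : 0 < ς) (r : ℝ) :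
    ((gaussianReal ϑ (Real.toNNReal (ς ^ 2))) (Set.Iio r)).toReal =
      stdNormalCDF ((r - ϑ) / ς) := by
  rw [gauss_set hς _ measurableSet_Iio, Phi_eq]
  have hpre : (fun x : ℝ => x * ς + ϑ) ⁻¹' Set.Iio r = Set.Iio ((r - ϑ) / ς) := by
    ext x
    simp only [Set.mem_preimage, Set.mem_Iio]
    rw [lt_div_iff₀ hς]
    constructor <;> intro h <;> linarith
  rw [hpre, ← MeasureTheory.integral_Iic_eq_integral_Iio]

lemma gauss_Ioi (hς : 0 < ς) (r : ℝ) :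
    ((gaussianReal ϑ (Real.toNNReal (ς ^ 2))) (Set.Ioi r)).toReal =
      1 - stdNormalCDF ((r - ϑ) / ς) := by
  rw [gauss_set hς _ measurableSet_Ioi]
  have hpre : (fun x : ℝ => x * ς + ϑ) ⁻¹' Set.Ioi r = Set.Ioi ((r - ϑ) / ς) := by
    ext x
    simp only [Set.mem_preimage, Set.mem_Ioi]
    rw [div_lt_iff₀ hς]
    constructor <;> intro h <;> linarith
  rw [hpre]
  linarith [Phi_add_Ioi ((r - ϑ) / ς)]

lemma gauss_univ : ((gaussianReal ϑ (Real.toNNReal (ς ^ 2))) Set.univ).toReal = 1 := by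
  simp

/-- Suppose `T` is unbounded from above and from below (`a_1 = −∞` and `b_K = ∞`).
Then for every `α ∈ (0,1)`,
`2·Φ^{−1}(1 − p_* α/2) ≤ 2·Φ^{−1}(1 − α/2) + (a_K − b_1)/ς`, where `a_K − b_1` is
interpreted as `0` in case `K = 1`, and `p_* = inf_{ϑ} P(N(ϑ,ς²) ∈ T)`. -/
theorem stmt_13
    (ς : ℝ) (hς : 0 < ς) (K : ℕ) (hK : 1 ≤ K) (a b : ℕ → EReal)
    (hab : ∀ i < K, a i < b i) (hba : ∀ i, i + 1 < K → b i < a (i + 1))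
    (T : Set ℝ)
    (hT : T = ⋃ i ∈ Finset.range K, {x : ℝ | a i < (x : EReal) ∧ (x : EReal) < b i})
    (ha1 : a 0 = ⊥) (hbK : b (K - 1) = ⊤)
    (pstar : ℝ)
    (hp : pstar = ⨅ ϑ : ℝ, ((gaussianReal ϑ (Real.toNNReal (ς ^ 2))) T).toReal)
    (α : ℝ) (hα : α ∈ Set.Ioo (0 : ℝ) 1) :
    2 * stdNormalCDFInv (1 - pstar * (α / 2)) ≤
      2 * stdNormalCDFInv (1 - α / 2) +
        (if K = 1 then 0 else (a (K - 1)).toReal - (b 0).toReal) / ς := by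
  obtain ⟨hα0, hα1⟩ := hα
  by_cases hK1 : K = 1
  · -- degenerate case : T = univ
    subst hK1
    have hTuniv : T = Set.univ := by
      rw [hT]
      ext x
      simp only [Finset.range_one, Finset.mem_singleton, Set.mem_iUnion, Set.mem_setOf_eq,
        Set.mem_univ, iff_true]
      exact ⟨0, by simp, by rw [ha1]; exact EReal.bot_lt_coe x,
        by rw [show (1:ℕ) - 1 = 0 from rfl] at hbK; rw [hbK]; exact EReal.coe_lt_top x⟩
    have hpone : pstar = 1 := by
      rw [hp, hTuniv]
      simp [measure_univ]
    rw [hpone, if_pos rfl, one_mul, zero_div, add_zero]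
  · -- main case : K ≥ 2
    obtain ⟨m, rfl⟩ : ∃ m, K = m + 2 := ⟨K - 2, by omega⟩
    clear hK hK1
    have hm1 : m + 1 < m + 2 := by omega
    have hm2 : m + 2 - 1 = m + 1 := rfl
    rw [hm2] at hbK ⊢
    -- basic finiteness facts
    have hb0bot : (⊥ : EReal) < b 0 := ha1 ▸ hab 0 (by omega)
    have hb0top : b 0 < ⊤ := lt_of_lt_of_le (hba 0 (by omega)) (le_top.trans_eq rfl) |>.trans_le le_top |>.trans_le le_rfl
    have haKtop : a (m + 1) < ⊤ := lt_of_lt_of_le (hab (m + 1) hm1) le_top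
    have haKbot : (⊥ : EReal) < a (m + 1) := by
      refine lt_trans ?_ (hba m (by omega))
      exact lt_of_le_of_lt bot_le (hab m (by omega))
    -- chain : b 0 ≤ a (m+1)
    have hchain : b 0 ≤ a (m + 1) := by
      have key : ∀ j, j + 1 < m + 2 → b 0 ≤ a (j + 1) := by
        intro j
        induction j with
        | zero => exact fun h => (hba 0 h).le
        | succ n ih =>
          intro h
          have h1 : n + 1 < m + 2 := by omega
          exact le_trans (le_trans (ih h1) (hab (n + 1) h1).le) (hba (n + 1) h).le
      exact key m (by omega)
    set B : ℝ := (b 0).toReal with hB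
    set A : ℝ := (a (m + 1)).toReal with hA
    have hbB : b 0 = (B : EReal) := (EReal.coe_toReal hb0top.ne hb0bot.ne').symm
    have haA : a (m + 1) = (A : EReal) := (EReal.coe_toReal haKtop.ne haKbot.ne').symm
    have hBA : B ≤ A := EReal.toReal_le_toReal hchain hb0bot.ne' haKtop.ne
    set c : ℝ := (A - B) / (2 * ς) with hc
    have hc0 : 0 ≤ c := by
      apply div_nonneg (by linarith) (by linarith)
    -- T contains Iio B ∪ Ioi A
    have hsub : Set.Iio B ∪ Set.Ioi A ⊆ T := by
      rw [hT]
      rintro x (hx | hx)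
      · refine Set.mem_iUnion.mpr ⟨0, Set.mem_iUnion.mpr ⟨Finset.mem_range.mpr (by omega), ?_⟩⟩
        exact ⟨ha1 ▸ EReal.bot_lt_coe x, hbB ▸ EReal.coe_lt_coe_iff.mpr hx⟩
      · refine Set.mem_iUnion.mpr ⟨m + 1, Set.mem_iUnion.mpr ⟨Finset.mem_range.mpr hm1, ?_⟩⟩
        exact ⟨haA ▸ EReal.coe_lt_coe_iff.mpr hx, hbK ▸ EReal.coe_lt_top x⟩
    -- lower bound for the infimum
    have bound : ∀ ϑ : ℝ, 2 * stdNormalCDF (-c) ≤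
        ((gaussianReal ϑ (Real.toNNReal (ς ^ 2))) T).toReal := by
      intro ϑ
      set μ := gaussianReal ϑ (Real.toNNReal (ς ^ 2)) with hμ
      have h1 : μ (Set.Iio B ∪ Set.Ioi A) ≤ μ T := measure_mono hsub
      have h2 : μ (Set.Iio B ∪ Set.Ioi A) = μ (Set.Iio B) + μ (Set.Ioi A) :=
        measure_union ((Set.Iic_disjoint_Ioi hBA).mono Set.Iio_subset_Iic_self le_rfl) measurableSet_Ioi
      have h3 : (μ (Set.Iio B)).toReal + (μ (Set.Ioi A)).toReal ≤ (μ T).toReal := by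
        rw [← ENNReal.toReal_add (measure_ne_top μ _) (measure_ne_top μ _), ← h2]
        exact ENNReal.toReal_mono (measure_ne_top μ _) h1
      rw [gauss_Iio hς B, gauss_Ioi hς A] at h3
      refine le_trans ?_ h3
      have ht := symm_min c hc0 ((ϑ - (A + B) / 2) / ς)
      have e1 : (ϑ - (A + B) / 2) / ς - c = -((A - ϑ) / ς) := by
        rw [hc]; field_simp; ring
      have e2 : -((ϑ - (A + B) / 2) / ς) - c = (B - ϑ) / ς := by
        rw [hc]; field_simp; ring
      rw [e1, e2] at ht
      linarith [Phi_neg ((A - ϑ) / ς)]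
    have hlb : 2 * stdNormalCDF (-c) ≤ pstar := by
      rw [hp]; exact le_ciInf bound
    have hub : pstar ≤ 1 := by
      rw [hp]
      refine le_trans (ciInf_le ⟨0, ?_⟩ 0) ?_
      · rintro x ⟨ϑ, rfl⟩
        exact ENNReal.toReal_nonneg
      · exact ENNReal.toReal_le_of_le_ofReal one_pos.le (by simpa using prob_le_one)
    have hpos : 0 < pstar := lt_of_lt_of_le (by have := Phi_pos (-c); linarith) hlb
    -- the two quantile points
    have hq1 : 1 - pstar * (α / 2) ∈ Set.Ioo (0:ℝ) 1 := by
      constructor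
      · nlinarith
      · nlinarith
    have hq2 : 1 - α / 2 ∈ Set.Ioo (0:ℝ) 1 := by constructor <;> [linarith; linarith]
    set y := stdNormalCDFInv (1 - pstar * (α / 2)) with hy
    set x := stdNormalCDFInv (1 - α / 2) with hx
    have hΦy : stdNormalCDF y = 1 - pstar * (α / 2) := Phi_inv_eq hq1
    have hΦx : stdNormalCDF x = 1 - α / 2 := Phi_inv_eq hq2
    have hx0 : 0 ≤ x := by
      have : stdNormalCDF 0 ≤ stdNormalCDF x := by rw [Phi_zero, hΦx]; linarith
      exact strictMono_Phi.le_iff_le.mp this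
    have key : stdNormalCDF y ≤ stdNormalCDF (x + c) := by
      have h4 := subadd hx0 hc0
      have h5 : stdNormalCDF (-(x + c)) = 1 - stdNormalCDF (x + c) := Phi_neg _
      have h6 : stdNormalCDF (-x) = α / 2 := by rw [Phi_neg, hΦx]; ring
      have h7 : 0 < stdNormalCDF (-c) := Phi_pos _
      rw [h5, h6] at h4
      rw [hΦy]
      nlinarith
    have hyx : y ≤ x + c := strictMono_Phi.le_iff_le.mp key
    rw [if_neg (by omega)]
    have : (A - B) / ς = 2 * c := by
      rw [hc]; field_simp
    rw [this]
    linarith
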